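/- Let R be a proper normed division ring, M a Polish R-vector space, and N ⊆ M an F_σ vector subspace. Then exactly one of the following holds: (1) dim_R(M/N) is countable; (2) there is a continuous R-linear map ℓ¹(R) → M that descends to an injection ℓ¹(R) → M/N. -/

import Mathlib

/-- Membership in `ℓ¹(R)`: the series `Σ ν (x k) / k!` converges. -/
def MemL1 {R : Type*} (ν : R → ℝ) (x : ℕ → R) : Prop :=
  Summable fun k => ν (x k) / (Nat.factorial k : ℝ)

/-- The `ℓ¹` norm `Σ_k ν (x k) / k!`. -/
noncomputable def l1Norm {R : Type*} (ν : R → ℝ) (x : ℕ → R) : ℝ :=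
  ∑' k, ν (x k) / (Nat.factorial k : ℝ)

open Filter Set Topology Cardinal




/-- Tube lemma for a compact slice. -/
theorem mytube {X Y Z : Type*} [TopologicalSpace X] [TopologicalSpace Y] [TopologicalSpace Z]
    (φ : X × Y → Z) (hφ : Continuous φ) {K : Set X} (hK : IsCompact K) {O : Set Z}
    (hO : IsOpen O) (y0 : Y) (h0 : ∀ x ∈ K, φ (x, y0) ∈ O) :
    ∃ V ∈ 𝓝 y0, ∀ x ∈ K, ∀ y ∈ V, φ (x, y) ∈ O := by
  have hopen : IsOpen (φ ⁻¹' O) := hO.preimage hφ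
  have h1 : ∀ x ∈ K, ∃ A : Set X, ∃ B : Set Y,
      IsOpen A ∧ IsOpen B ∧ x ∈ A ∧ y0 ∈ B ∧ A ×ˢ B ⊆ φ ⁻¹' O := by
    intro x hx
    rcases (isOpen_prod_iff.1 hopen) x y0 (h0 x hx) with ⟨A, B, hA, hB, hxA, hyB, hsub⟩
    exact ⟨A, B, hA, hB, hxA, hyB, hsub⟩
  choose! A B hA hB hxA hyB hsub using h1
  obtain ⟨t, ht, hcov⟩ := hK.elim_nhds_subcover A (fun x hx => (hA x hx).mem_nhds (hxA x hx))
  refine ⟨⋂ x ∈ t, B x, ?_, ?_⟩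
  · exact Filter.biInter_finset_mem t |>.2 fun x hx => (hB x (ht x hx)).mem_nhds (hyB x (ht x hx))
  · intro x hx y hy
    rcases Set.mem_iUnion₂.1 (hcov hx) with ⟨x', hx', hxx'⟩
    exact hsub x' (ht x' hx') (Set.mk_mem_prod hxx' (Set.mem_iInter₂.1 hy x' hx'))

/-- Sum-chain lemma: if `a k ∈ W (c + 1 + k)` and consecutive `W`'s add up, the sum is in `W c`. -/
theorem sumchain {M : Type*} [AddCommMonoid M] {W : ℕ → Set M}
    (hW : ∀ j, ∀ a ∈ W (j + 1), ∀ b ∈ W (j + 1), a + b ∈ W j)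
    (h0 : ∀ j, (0 : M) ∈ W j) :
    ∀ (L : ℕ) (c : ℕ) (a : ℕ → M), (∀ k < L, a k ∈ W (c + 1 + k)) →
      (∑ k ∈ Finset.range L, a k) ∈ W c := by
  intro L
  induction L with
  | zero => intro c a _; simpa using h0 c
  | succ L ih =>
    intro c a ha
    rw [Finset.sum_range_succ']
    have h1 : (∑ k ∈ Finset.range L, a (k + 1)) ∈ W (c + 1) := by
      refine ih (c + 1) (fun k => a (k + 1)) fun k hk => ?_
      have := ha (k + 1) (by omega)
      convert this using 2
      omega
    have h2 : a 0 ∈ W (c + 1) := by simpa using ha 0 (by omega)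
    exact hW c _ h1 _ h2

section Rside
variable {R : Type*} [DivisionRing R] {ν : R → ℝ}

/-- ν-balls around 0 are neighborhoods of 0 (given the topology axiom). -/
theorem nu_ball_mem_nhds [TopologicalSpace R]
    (hzero : ∀ a : R, ν a = 0 ↔ a = 0)
    (hadd : ∀ a b : R, ν (a + b) ≤ ν a + ν b)
    (htop : ∀ s : Set R, IsOpen s ↔ ∀ a ∈ s, ∃ ε > 0, ∀ b, ν (b - a) < ε → b ∈ s)
    {ε : ℝ} (hε : 0 < ε) : {r : R | ν r < ε} ∈ 𝓝 (0 : R) := by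
  have hopen : IsOpen {r : R | ν r < ε} := by
    rw [htop]
    intro a ha
    refine ⟨ε - ν a, by simpa using ha, fun b hb => ?_⟩
    have : ν b ≤ ν (b - a) + ν a := by
      simpa [sub_add_cancel] using hadd (b - a) a
    simp only [Set.mem_setOf_eq] at ha ⊢
    linarith
  have h0 : ν (0 : R) = 0 := (hzero 0).2 rfl
  exact hopen.mem_nhds (by simp [h0, hε])

/-- closed ν-balls are compact. -/
theorem nu_ball_compact [TopologicalSpace R]
    (hproper : ∀ (a : R) (ε : ℝ), IsCompact {b : R | ν (b - a) ≤ ε}) (c : ℝ) :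
    IsCompact {r : R | ν r ≤ c} := by
  have := hproper 0 c
  simpa using this

theorem memL1_add {x y : ℕ → R} (hnonneg : ∀ a, 0 ≤ ν a)
    (hadd : ∀ a b : R, ν (a + b) ≤ ν a + ν b)
    (hx : MemL1 ν x) (hy : MemL1 ν y) : MemL1 ν (x + y) := by
  refine Summable.of_nonneg_of_le (fun k => div_nonneg (hnonneg _) (by positivity)) (fun k => ?_) (hx.add hy)
  have h1 : ν (x k + y k) ≤ ν (x k) + ν (y k) := hadd _ _
  have h2 : (0:ℝ) < (Nat.factorial k : ℝ) := by positivity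
  rw [← add_div]
  exact div_le_div_of_nonneg_right h1 h2.le

theorem memL1_neg {x : ℕ → R} (hneg : ∀ a : R, ν (-a) = ν a) (hx : MemL1 ν x) :
    MemL1 ν (-x) := by
  refine hx.congr fun k => ?_
  simp [hneg]

theorem memL1_smul {x : ℕ → R} (hnonneg : ∀ a, 0 ≤ ν a)
    (hmul : ∀ a b : R, ν (a * b) ≤ ν a * ν b) (r : R) (hx : MemL1 ν x) :
    MemL1 ν (r • x) := by
  refine Summable.of_nonneg_of_le (fun k => div_nonneg (hnonneg _) (by positivity)) (fun k => ?_) (hx.mul_left (ν r))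
  have h2 : (0:ℝ) < (Nat.factorial k : ℝ) := by positivity
  have : ν (r * x k) ≤ ν r * ν (x k) := hmul _ _
  simp only [Pi.smul_apply, smul_eq_mul, mul_div_assoc]
  rw [← mul_div_assoc]
  exact div_le_div_of_nonneg_right this h2.le

theorem memL1_sub {x y : ℕ → R} (hnonneg : ∀ a, 0 ≤ ν a)
    (hneg : ∀ a : R, ν (-a) = ν a)
    (hadd : ∀ a b : R, ν (a + b) ≤ ν a + ν b)
    (hx : MemL1 ν x) (hy : MemL1 ν y) : MemL1 ν (x - y) := by
  have := memL1_add hnonneg hadd hx (memL1_neg hneg hy)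
  simpa [sub_eq_add_neg] using this

omit [DivisionRing R] in
theorem l1Norm_nonneg {x : ℕ → R} (hnonneg : ∀ a, 0 ≤ ν a) : 0 ≤ l1Norm ν x :=
  tsum_nonneg fun k => div_nonneg (hnonneg _) (by positivity)

omit [DivisionRing R] in
/-- coefficient bound: `ν (x k) ≤ l1Norm ν x * k!` -/
theorem coef_bound {x : ℕ → R} (hnonneg : ∀ a, 0 ≤ ν a) (hx : MemL1 ν x) (k : ℕ) :
    ν (x k) ≤ l1Norm ν x * (Nat.factorial k : ℝ) := by
  have h2 : (0:ℝ) < (Nat.factorial k : ℝ) := by positivity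
  have h1 : ν (x k) / (Nat.factorial k : ℝ) ≤ l1Norm ν x :=
    Summable.le_tsum hx k fun j _ => div_nonneg (hnonneg _) (by positivity)
  calc ν (x k) = ν (x k) / (Nat.factorial k : ℝ) * (Nat.factorial k : ℝ) := by
        field_simp
    _ ≤ l1Norm ν x * (Nat.factorial k : ℝ) := by
        exact mul_le_mul_of_nonneg_right h1 h2.le

end Rside




section L1
variable {R : Type*} [DivisionRing R] {M : Type*} [AddCommGroup M] [Module R M]
  [TopologicalSpace M] [IsTopologicalAddGroup M]

/-- If the quotient has uncountable dimension, every neighborhood of zero contains a vector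
whose image avoids the span of any countable set. -/
theorem exists_small_indep [TopologicalSpace.SeparableSpace M]
    (N : Submodule R M) (hrank : ¬ Module.rank R (M ⧸ N) ≤ Cardinal.aleph0)
    {U : Set M} (hU : U ∈ 𝓝 (0 : M)) (s : Set (M ⧸ N)) (hs : s.Countable) :
    ∃ v ∈ U, N.mkQ v ∉ Submodule.span R s := by
  by_contra hcon
  push_neg at hcon
  apply hrank
  set X : Submodule R (M ⧸ N) := Submodule.span R s with hX
  set P : Submodule R M := X.comap N.mkQ with hP
  have hUP : U ⊆ (P : Set M) := fun v hv => hcon v hv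
  have hopen : IsOpen (P : Set M) :=
    AddSubgroup.isOpen_of_mem_nhds P.toAddSubgroup (Filter.mem_of_superset hU hUP)
  -- the quotient M ⧸ P is countable
  obtain ⟨D, hDc, hDd⟩ := TopologicalSpace.exists_countable_dense M
  have hsurj : ∀ y : M ⧸ P, ∃ d : D, P.mkQ d = y := by
    intro y
    obtain ⟨x, rfl⟩ := Submodule.mkQ_surjective P y
    have hopen2 : IsOpen {z : M | z - x ∈ P} :=
      hopen.preimage (continuous_id.sub continuous_const)
    obtain ⟨d, hdD, hd⟩ := hDd.exists_mem_open hopen2 ⟨x, by simp⟩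
    refine ⟨⟨d, hdD⟩, ?_⟩
    simpa [Submodule.Quotient.eq] using (Submodule.Quotient.eq P).2 hd
  have hDcount : Countable D := hDc.to_subtype
  have hcount : Countable (M ⧸ P) := by
    have : Function.Surjective (fun d : D => P.mkQ d) := fun y => hsurj y
    exact this.countable
  -- rank bounds
  have hNP : N ≤ P := by
    intro x hx
    simp only [hP, Submodule.mem_comap]
    have : N.mkQ x = 0 := by simpa [Submodule.Quotient.mk_eq_zero] using hx
    rw [this]; exact X.zero_mem
  have hmap : P.map N.mkQ = X := by
    rw [hP, Submodule.map_comap_eq, Submodule.range_mkQ, top_inf_eq]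
  have e := Submodule.quotientQuotientEquivQuotient N P hNP
  have h1 : Module.rank R ((M ⧸ N) ⧸ P.map N.mkQ) ≤ Cardinal.aleph0 := by
    rw [e.rank_eq]
    exact (rank_le_card _ _).trans (Cardinal.mk_le_aleph0)
  have h2 : Module.rank R (P.map N.mkQ) ≤ Cardinal.aleph0 := by
    rw [hmap, hX]
    exact (rank_span_le s).trans hs.le_aleph0
  have := rank_quotient_add_rank_of_divisionRing (P.map N.mkQ)
  rw [← this]
  calc Module.rank R ((M ⧸ N) ⧸ P.map N.mkQ) + Module.rank R (P.map N.mkQ)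
      ≤ Cardinal.aleph0 + Cardinal.aleph0 := add_le_add h1 h2
    _ = Cardinal.aleph0 := Cardinal.aleph0_add_aleph0
end L1




section NotTwo
variable {R : Type*} [DivisionRing R] {ν : R → ℝ}

/-- the indicator sequences indexed by reals -/
noncomputable def indSeq (t : ℝ) : ℕ → R := fun n =>
  if ((Denumerable.eqv ℚ).symm n : ℚ) < t then 1 else 0

theorem indSeq_memL1 (hnonneg : ∀ a, 0 ≤ ν a) (hzero : ∀ a : R, ν a = 0 ↔ a = 0) (t : ℝ) :
    MemL1 ν (indSeq t) := by
  have h0 : ν (0 : R) = 0 := (hzero 0).2 rfl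
  refine Summable.of_nonneg_of_le (fun k => div_nonneg (hnonneg _) (by positivity))
    (fun k => ?_) ((Real.summable_pow_div_factorial 1).mul_left (ν 1))
  have hb : ν (indSeq t k : R) ≤ ν (1 : R) := by
    unfold indSeq
    split
    · exact le_refl _
    · rw [h0]; exact hnonneg 1
  have h2 : (0:ℝ) < (Nat.factorial k : ℝ) := by positivity
  rw [one_pow, ← mul_div_assoc, mul_one]
  exact div_le_div_of_nonneg_right hb h2.le

/-- extraction: if a finite combination of indicator sequences vanishes, all coefficients do -/
theorem indSeq_extract : ∀ (s : Finset ℝ) (g : ℝ → R),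
    (∀ n, (∑ t ∈ s, g t * indSeq t n) = 0) → ∀ t ∈ s, g t = 0 := by
  intro s
  induction s using Finset.strongInduction with
  | _ s ih =>
    intro g hg t ht
    have hne : s.Nonempty := ⟨t, ht⟩
    set T := s.max' hne with hT
    -- bound below T dominating all other elements
    set b : ℝ := if h : (s.erase T).Nonempty then (s.erase T).max' h else T - 1 with hb
    have hbT : b < T := by
      rw [hb]
      split
      · next h =>
        have hmem := (s.erase T).max'_mem h
        have h1 : (s.erase T).max' h ≤ T := s.le_max' _ (Finset.mem_of_mem_erase hmem)
        have h2 : (s.erase T).max' h ≠ T := Finset.ne_of_mem_erase hmem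
        exact lt_of_le_of_ne h1 h2
      · linarith
    have hub : ∀ u ∈ s.erase T, u ≤ b := by
      intro u hu
      rw [hb]
      split
      · exact (s.erase T).le_max' u hu
      · next h => exact absurd ⟨u, hu⟩ h
    obtain ⟨ρ, hρ1, hρ2⟩ := exists_rat_btwn hbT
    set n := Denumerable.eqv ℚ ρ with hn
    have hev : ((Denumerable.eqv ℚ).symm n : ℚ) = ρ := by simp [hn]
    have hTval : indSeq (R := R) T n = 1 := by
      unfold indSeq
      rw [hev, if_pos hρ2]
    have hoval : ∀ u ∈ s, u ≠ T → indSeq (R := R) u n = 0 := by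
      intro u hu hune
      unfold indSeq
      rw [hev, if_neg]
      push_neg
      exact le_trans (hub u (Finset.mem_erase.2 ⟨hune, hu⟩)) hρ1.le
    have hgT : g T = 0 := by
      have := hg n
      rw [Finset.sum_eq_single_of_mem T (s.max'_mem hne)
        (fun u hu hune => by rw [hoval u hu hune, mul_zero])] at this
      rwa [hTval, mul_one] at this
    rcases eq_or_ne t T with rfl | htT
    · exact hgT
    · -- recurse on the erased set
      refine ih (s.erase T) (Finset.erase_ssubset (s.max'_mem hne)) g (fun n' => ?_) t
        (Finset.mem_erase.2 ⟨htT, ht⟩)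
      have hsplit := Finset.add_sum_erase s (fun u => g u * indSeq u n') (s.max'_mem hne)
      have h5 := hg n'
      rw [← hsplit] at h5
      rw [show (s.max' hne) = T from rfl, hgT, zero_mul, zero_add] at h5
      exact h5
end NotTwo

section NotTwoMain
variable {R : Type*} [DivisionRing R] {ν : R → ℝ}
variable {M : Type*} [AddCommGroup M] [Module R M]

theorem memL1_add' (hnonneg : ∀ a, 0 ≤ ν a)
    (hadd : ∀ a b : R, ν (a + b) ≤ ν a + ν b)
    {x y : ℕ → R} (hx : MemL1 ν x) (hy : MemL1 ν y) : MemL1 ν (x + y) := by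
  refine Summable.of_nonneg_of_le (fun k => div_nonneg (hnonneg _) (by positivity))
    (fun k => ?_) (hx.add hy)
  have h2 : (0:ℝ) < (Nat.factorial k : ℝ) := by positivity
  rw [← add_div]
  exact div_le_div_of_nonneg_right (hadd _ _) h2.le

theorem memL1_smul' (hnonneg : ∀ a, 0 ≤ ν a)
    (hmul : ∀ a b : R, ν (a * b) ≤ ν a * ν b) (r : R) {x : ℕ → R} (hx : MemL1 ν x) :
    MemL1 ν (r • x) := by
  refine Summable.of_nonneg_of_le (fun k => div_nonneg (hnonneg _) (by positivity))
    (fun k => ?_) (hx.mul_left (ν r))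
  have h2 : (0:ℝ) < (Nat.factorial k : ℝ) := by positivity
  simp only [Pi.smul_apply, smul_eq_mul, mul_div_assoc]
  rw [← mul_div_assoc]
  exact div_le_div_of_nonneg_right (hmul _ _) h2.le

theorem memL1_zero (hzero : ∀ a : R, ν a = 0 ↔ a = 0) : MemL1 ν (0 : ℕ → R) := by
  have h0 : ν (0 : R) = 0 := (hzero 0).2 rfl
  refine summable_zero.congr fun k => ?_
  simp [h0]

/-- If `(2)` holds, the rank of `M ⧸ N` is uncountable. -/
theorem not_two (hnonneg : ∀ a, 0 ≤ ν a)
    (hzero : ∀ a : R, ν a = 0 ↔ a = 0)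
    (hadd : ∀ a b : R, ν (a + b) ≤ ν a + ν b)
    (hmul : ∀ a b : R, ν (a * b) ≤ ν a * ν b)
    (N : Submodule R M)
    (hrank : Module.rank R (M ⧸ N) ≤ Cardinal.aleph0)
    (f : {x : ℕ → R // MemL1 ν x} → M)
    (hfadd : ∀ (x y : {x : ℕ → R // MemL1 ν x}) (h : MemL1 ν (x.1 + y.1)),
      f ⟨x.1 + y.1, h⟩ = f x + f y)
    (hfsmul : ∀ (r : R) (x : {x : ℕ → R // MemL1 ν x}) (h : MemL1 ν (r • x.1)),
      f ⟨r • x.1, h⟩ = r • f x)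
    (hfinj : ∀ x y : {x : ℕ → R // MemL1 ν x}, f x - f y ∈ N → x = y) : False := by
  classical
  set zeroElt : {x : ℕ → R // MemL1 ν x} := ⟨0, memL1_zero hzero⟩ with hz
  have hf0 : f zeroElt = 0 := by
    have hmem0 : MemL1 ν ((0 : R) • zeroElt.1) := by
      rw [zero_smul]; exact memL1_zero hzero
    have h1 := hfsmul 0 zeroElt hmem0
    have h2 : (⟨(0 : R) • zeroElt.1, hmem0⟩ : {x : ℕ → R // MemL1 ν x}) = zeroElt :=
      Subtype.ext (by simp [hz])
    rw [h2] at h1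
    rw [h1, zero_smul]
  set xel : ℝ → {x : ℕ → R // MemL1 ν x} :=
    fun t => ⟨indSeq t, indSeq_memL1 hnonneg hzero t⟩ with hxel
  -- finite sums
  have memfin : ∀ (s : Finset ℝ) (g : ℝ → R), MemL1 ν (∑ t ∈ s, g t • indSeq t) := by
    intro s g
    induction s using Finset.induction with
    | empty => simpa using memL1_zero hzero
    | insert a s' hnotmem ih =>
      rw [Finset.sum_insert hnotmem]
      exact memL1_add' hnonneg hadd
        (memL1_smul' hnonneg hmul _ (indSeq_memL1 hnonneg hzero _)) ih
  have sumeq : ∀ (s : Finset ℝ) (g : ℝ → R),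
      f ⟨∑ t ∈ s, g t • indSeq t, memfin s g⟩ = ∑ t ∈ s, g t • f (xel t) := by
    intro s g
    induction s using Finset.induction with
    | empty =>
      have heq : (⟨∑ t ∈ (∅ : Finset ℝ), g t • indSeq t, memfin ∅ g⟩ :
          {x : ℕ → R // MemL1 ν x}) = zeroElt := Subtype.ext (by simp [hz])
      rw [heq, hf0, Finset.sum_empty]
    | insert a s' hnotmem ih =>
      have hval : (∑ t ∈ insert a s', g t • indSeq t) =
          (⟨g a • indSeq a, memL1_smul' hnonneg hmul _ (indSeq_memL1 hnonneg hzero _)⟩ :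
            {x : ℕ → R // MemL1 ν x}).1 + (⟨∑ t ∈ s', g t • indSeq t, memfin s' g⟩ :
            {x : ℕ → R // MemL1 ν x}).1 := by
        rw [Finset.sum_insert hnotmem]
      have h1 : f ⟨∑ t ∈ insert a s', g t • indSeq t, memfin _ g⟩ =
          f ⟨g a • indSeq a, memL1_smul' hnonneg hmul _ (indSeq_memL1 hnonneg hzero _)⟩ +
            f ⟨∑ t ∈ s', g t • indSeq t, memfin s' g⟩ := by
        rw [show (⟨∑ t ∈ insert a s', g t • indSeq t, memfin _ g⟩ :
            {x : ℕ → R // MemL1 ν x}) = ⟨_ + _, by rw [← hval]; exact memfin _ g⟩ from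
          Subtype.ext hval]
        exact hfadd _ _ _
      rw [h1, ih, Finset.sum_insert hnotmem]
      congr 1
      have := hfsmul (g a) (xel a) (memL1_smul' hnonneg hmul _ (indSeq_memL1 hnonneg hzero _))
      convert this using 2
  -- the family is linearly independent
  have hli : LinearIndependent R (fun t : ℝ => N.mkQ (f (xel t))) := by
    rw [linearIndependent_iff']
    intro s g hsum t ht
    have h6 : N.mkQ (∑ u ∈ s, g u • f (xel u)) = 0 := by
      rw [map_sum]
      simp_rw [map_smul]
      simpa using hsum
    have hN : (∑ u ∈ s, g u • f (xel u)) ∈ N :=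
      (Submodule.Quotient.mk_eq_zero N).1 (by rw [← N.mkQ_apply]; exact h6)
    rw [← sumeq s g] at hN
    have heq : (⟨∑ u ∈ s, g u • indSeq u, memfin s g⟩ : {x : ℕ → R // MemL1 ν x}) = zeroElt := by
      apply hfinj
      rw [hf0, sub_zero]
      exact hN
    have hval : (∑ u ∈ s, g u • indSeq u) = (0 : ℕ → R) := congrArg Subtype.val heq
    refine indSeq_extract s g (fun n => ?_) t ht
    have := congrFun hval n
    simpa [Finset.sum_apply] using this
  -- cardinality contradiction
  have hcard := hli.cardinal_lift_le_rank
  rw [Cardinal.mk_real, Cardinal.lift_continuum] at hcard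
  have : (Cardinal.continuum : Cardinal) ≤ Cardinal.aleph0 := by
    calc (Cardinal.continuum : Cardinal)
        ≤ Cardinal.lift.{0} (Module.rank R (M ⧸ N)) := hcard
      _ ≤ Cardinal.lift.{0} Cardinal.aleph0 := Cardinal.lift_le.2 hrank
      _ = Cardinal.aleph0 := Cardinal.lift_aleph0
  exact absurd this (not_le.2 Cardinal.aleph0_lt_continuum)

end NotTwoMain




section Constr
variable {R : Type*} [DivisionRing R] [TopologicalSpace R]
variable {M : Type*} [AddCommGroup M] [Module R M]

/-- compact set of partial combinations with coefficients bounded by `j * k!`. -/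
def myKStar (ν : R → ℝ) [TopologicalSpace M] (s : ℕ → Set M × M) (j : ℕ) : Set M :=
  (fun r : ℕ → R => ∑ k ∈ Finset.range j, r k • (s k).2) ''
    {r : ℕ → R | ∀ k, ν (r k) ≤ (j : ℝ) * (Nat.factorial k : ℝ)}

/-- compact set of normalized combinations with leading vector `v k0`. -/
def myCSet (ν : R → ℝ) [TopologicalSpace M] (s : ℕ → Set M × M) (k0 m j : ℕ) : Set M :=
  (fun r : ℕ → R => (s k0).2 + ∑ k ∈ Finset.Ico (k0 + 1) j, r k • (s k).2) ''
    {r : ℕ → R | ∀ k, ν (r k) ≤ (m : ℝ) * (Nat.factorial k : ℝ)}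

/-- the conditions at stage `j` of the construction. -/
def GoodAt (ν : R → ℝ) [MetricSpace M] (F : ℕ → Set M) (N : Submodule R M)
    (s : ℕ → Set M × M) (j : ℕ) (Wv : Set M × M) : Prop :=
  Wv.1 ∈ 𝓝 (0 : M) ∧ IsClosed Wv.1 ∧
  (∀ i, j = i + 1 → ∀ a ∈ Wv.1, ∀ b ∈ Wv.1, a + b ∈ (s i).1) ∧
  (∀ c ∈ myKStar ν s j, ∀ w ∈ Wv.1, dist (c + w) c ≤ (2⁻¹ : ℝ) ^ j) ∧
  (∀ n k0 m : ℕ, n < j → k0 < j → m < j → ∀ p ∈ myCSet ν s k0 m j,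
    ∀ w1 ∈ Wv.1, ∀ w2 ∈ Wv.1, p + w1 + w2 ∉ F n) ∧
  (∀ r : R, ν r ≤ ((j : ℝ) + 1) * (Nat.factorial j : ℝ) → r • Wv.2 ∈ Wv.1) ∧
  (N.mkQ Wv.2 ∉ Submodule.span R (N.mkQ '' ((fun i => (s i).2) '' Set.Iio j)))

theorem myKStar_congr (ν : R → ℝ) [TopologicalSpace M] {s1 s2 : ℕ → Set M × M} {j : ℕ}
    (h : ∀ i < j, s1 i = s2 i) : myKStar ν s1 j = myKStar ν s2 j := by
  have hfun : (fun r : ℕ → R => ∑ k ∈ Finset.range j, r k • (s1 k).2) =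
      (fun r : ℕ → R => ∑ k ∈ Finset.range j, r k • (s2 k).2) := by
    funext r
    exact Finset.sum_congr rfl fun k hk => by rw [h k (Finset.mem_range.1 hk)]
  unfold myKStar
  rw [hfun]

theorem myCSet_congr (ν : R → ℝ) [TopologicalSpace M] {s1 s2 : ℕ → Set M × M} {k0 m j : ℕ}
    (hk0 : k0 < j) (h : ∀ i < j, s1 i = s2 i) : myCSet ν s1 k0 m j = myCSet ν s2 k0 m j := by
  have hfun : (fun r : ℕ → R => (s1 k0).2 + ∑ k ∈ Finset.Ico (k0 + 1) j, r k • (s1 k).2) =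
      (fun r : ℕ → R => (s2 k0).2 + ∑ k ∈ Finset.Ico (k0 + 1) j, r k • (s2 k).2) := by
    funext r
    have h1 : (s1 k0).2 = (s2 k0).2 := by rw [h k0 hk0]
    have h2 : ∑ k ∈ Finset.Ico (k0 + 1) j, r k • (s1 k).2 =
        ∑ k ∈ Finset.Ico (k0 + 1) j, r k • (s2 k).2 :=
      Finset.sum_congr rfl fun k hk => by rw [h k (Finset.mem_Ico.1 hk).2]
    rw [h1, h2]
  unfold myCSet
  rw [hfun]

theorem GoodAt_congr (ν : R → ℝ) [MetricSpace M] {F : ℕ → Set M} {N : Submodule R M}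
    {s1 s2 : ℕ → Set M × M} {j : ℕ} {Wv : Set M × M}
    (h : ∀ i < j, s1 i = s2 i) (hg : GoodAt ν F N s1 j Wv) : GoodAt ν F N s2 j Wv := by
  obtain ⟨h1, h2, h3, h4, h5, h6, h7⟩ := hg
  refine ⟨h1, h2, ?_, ?_, ?_, h6, ?_⟩
  · intro i hi a ha b hb
    rw [← h i (by omega)]
    exact h3 i hi a ha b hb
  · rw [← myKStar_congr ν h]; exact h4
  · intro n k0 m hn hk0 hm
    rw [← myCSet_congr ν hk0 h]
    exact h5 n k0 m hn hk0 hm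
  · have : (fun i => (s2 i).2) '' Set.Iio j = (fun i => (s1 i).2) '' Set.Iio j := by
      apply Set.image_congr
      intro i hi
      rw [h i hi]
    rw [this]
    exact h7

theorem ball_compact {ν : R → ℝ}
    (hproper : ∀ (a : R) (ε : ℝ), IsCompact {b : R | ν (b - a) ≤ ε}) (c : ℝ) :
    IsCompact {r : R | ν r ≤ c} := by
  have := hproper 0 c
  simpa using this

theorem myKStar_compact [TopologicalSpace M] [ContinuousAdd M] [ContinuousSMul R M] {ν : R → ℝ}
    (hproper : ∀ (a : R) (ε : ℝ), IsCompact {b : R | ν (b - a) ≤ ε})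
    (s : ℕ → Set M × M) (j : ℕ) : IsCompact (myKStar ν s j) := by
  have hdom : IsCompact {r : ℕ → R | ∀ k, ν (r k) ≤ (j : ℝ) * (Nat.factorial k : ℝ)} := by
    have : {r : ℕ → R | ∀ k, ν (r k) ≤ (j : ℝ) * (Nat.factorial k : ℝ)} =
        Set.pi Set.univ (fun k => {a : R | ν a ≤ (j : ℝ) * (Nat.factorial k : ℝ)}) := by
      ext r; simp [Set.mem_pi]
    rw [this]
    exact isCompact_univ_pi fun k => ball_compact hproper _
  exact hdom.image (by
    apply continuous_finset_sum
    intro k _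
    exact (continuous_apply k).smul continuous_const)

theorem myCSet_compact [TopologicalSpace M] [ContinuousAdd M] [ContinuousSMul R M] {ν : R → ℝ}
    (hproper : ∀ (a : R) (ε : ℝ), IsCompact {b : R | ν (b - a) ≤ ε})
    (s : ℕ → Set M × M) (k0 m j : ℕ) : IsCompact (myCSet ν s k0 m j) := by
  have hdom : IsCompact {r : ℕ → R | ∀ k, ν (r k) ≤ (m : ℝ) * (Nat.factorial k : ℝ)} := by
    have : {r : ℕ → R | ∀ k, ν (r k) ≤ (m : ℝ) * (Nat.factorial k : ℝ)} =
        Set.pi Set.univ (fun k => {a : R | ν a ≤ (m : ℝ) * (Nat.factorial k : ℝ)}) := by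
      ext r; simp [Set.mem_pi]
    rw [this]
    exact isCompact_univ_pi fun k => ball_compact hproper _
  exact hdom.image (by
    apply Continuous.add continuous_const
    apply continuous_finset_sum
    intro k _
    exact (continuous_apply k).smul continuous_const)

/-- key independence: normalized finite combinations of the `v i` stay outside `N`. -/
theorem indep_combo {N : Submodule R M} {v : ℕ → M} :
    ∀ (j : ℕ), (∀ i < j, N.mkQ (v i) ∉ Submodule.span R (N.mkQ '' (v '' Set.Iio i))) →
    ∀ k0 < j, ∀ c : ℕ → R, (v k0 + ∑ k ∈ Finset.Ico (k0 + 1) j, c k • v k) ∉ (N : Set M) := by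
  intro j
  induction j with
  | zero => intro _ k0 hk0; omega
  | succ j ih =>
    intro hP6 k0 hk0 c hmem
    have hP6' : ∀ i < j, N.mkQ (v i) ∉ Submodule.span R (N.mkQ '' (v '' Set.Iio i)) :=
      fun i hi => hP6 i (by omega)
    have hq0 : N.mkQ (v k0 + ∑ k ∈ Finset.Ico (k0 + 1) (j + 1), c k • v k) = 0 :=
      (Submodule.Quotient.mk_eq_zero N).2 hmem
    rcases Nat.lt_succ_iff_lt_or_eq.1 hk0 with hk0j | rfl
    · -- k0 < j
      have hsplit : ∑ k ∈ Finset.Ico (k0 + 1) (j + 1), c k • v k =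
          (∑ k ∈ Finset.Ico (k0 + 1) j, c k • v k) + c j • v j :=
        Finset.sum_Ico_succ_top (by omega) _
      by_cases hcj : c j = 0
      · rw [hsplit, hcj, zero_smul, add_zero] at hq0
        exact ih hP6' k0 hk0j c ((Submodule.Quotient.mk_eq_zero N).1 hq0)
      · -- c j ≠ 0 : solve for mkQ (v j)
        have hq1 : N.mkQ (v k0) + (∑ k ∈ Finset.Ico (k0 + 1) j, c k • N.mkQ (v k))
            + c j • N.mkQ (v j) = 0 := by
          rw [← hq0, hsplit]
          simp only [map_add, map_sum, map_smul]
          abel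
        set A := N.mkQ (v k0) + ∑ k ∈ Finset.Ico (k0 + 1) j, c k • N.mkQ (v k) with hA
        have hAspan : A ∈ Submodule.span R (N.mkQ '' (v '' Set.Iio j)) := by
          apply Submodule.add_mem
          · exact Submodule.subset_span ⟨v k0, ⟨k0, Set.mem_Iio.2 (by omega), rfl⟩, rfl⟩
          · apply Submodule.sum_mem
            intro k hk
            exact Submodule.smul_mem _ _ (Submodule.subset_span
              ⟨v k, ⟨k, Set.mem_Iio.2 (Finset.mem_Ico.1 hk).2, rfl⟩, rfl⟩)
        have hvj : N.mkQ (v j) = (c j)⁻¹ • (-A) := by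
          have h2 : c j • N.mkQ (v j) = -A := eq_neg_of_add_eq_zero_left (by rw [← hq1]; abel)
          rw [← h2, smul_smul, inv_mul_cancel₀ hcj, one_smul]
        exact hP6 j (by omega) (hvj ▸ Submodule.smul_mem _ _ (Submodule.neg_mem _ hAspan))
    · -- k0 = j : sum is empty
      rw [Finset.Ico_self, Finset.sum_empty, add_zero] at hmem
      have h1 : N.mkQ (v k0) = 0 := (Submodule.Quotient.mk_eq_zero N).2 hmem
      exact hP6 k0 (by omega) (h1 ▸ Submodule.zero_mem _)
end Constr
section Step
variable {R : Type*} [DivisionRing R] [TopologicalSpace R]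
variable {M : Type*} [AddCommGroup M] [Module R M]

theorem step_exists {ν : R → ℝ}
    (hproper : ∀ (a : R) (ε : ℝ), IsCompact {b : R | ν (b - a) ≤ ε})
    [MetricSpace M] [IsTopologicalAddGroup M] [ContinuousSMul R M]
    [TopologicalSpace.SeparableSpace M]
    (N : Submodule R M) (F : ℕ → Set M) (hFclosed : ∀ n, IsClosed (F n))
    (hFsub : ∀ n, F n ⊆ (N : Set M))
    (hrank : ¬ Module.rank R (M ⧸ N) ≤ Cardinal.aleph0)
    (s : ℕ → Set M × M) (j : ℕ)
    (hGood : ∀ i < j, GoodAt ν F N s i (s i)) :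
    ∃ Wv, GoodAt ν F N s j Wv := by
  classical
  -- (a) neighborhood for the chain condition
  have hV2 : ∃ V2 ∈ 𝓝 (0 : M), ∀ i, j = i + 1 → ∀ a ∈ V2, ∀ b ∈ V2, a + b ∈ (s i).1 := by
    cases j with
    | zero => exact ⟨Set.univ, Filter.univ_mem, fun i hi => by omega⟩
    | succ i0 =>
      have hWi0 : (s i0).1 ∈ 𝓝 (0 : M) := (hGood i0 (Nat.lt_succ_self i0)).1
      have hc : ContinuousAt (fun p : M × M => p.1 + p.2) (0, 0) :=
        (continuous_fst.add continuous_snd).continuousAt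
      have hpre : (fun p : M × M => p.1 + p.2) ⁻¹' (s i0).1 ∈ 𝓝 ((0 : M), (0 : M)) :=
        hc.preimage_mem_nhds (by simpa using hWi0)
      rcases mem_nhds_prod_iff.1 hpre with ⟨u, hu, w, hw, huw⟩
      refine ⟨u ∩ w, Filter.inter_mem hu hw, ?_⟩
      intro i hi a ha b hb
      obtain rfl : i = i0 := by omega
      exact huw (Set.mk_mem_prod ha.1 hb.2)
  -- (b) neighborhood for the metric-smallness condition
  have hKc : IsCompact (myKStar ν s j) := myKStar_compact hproper s j
  have hV3 : ∃ V3 ∈ 𝓝 (0 : M), ∀ c ∈ myKStar ν s j, ∀ w ∈ V3,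
      dist (c + w) c < (2⁻¹ : ℝ) ^ j := by
    obtain ⟨V, hV, hV'⟩ := mytube (fun p : M × M => dist (p.1 + p.2) p.1)
      ((continuous_fst.add continuous_snd).dist continuous_fst) hKc
      (isOpen_Iio (a := (2⁻¹ : ℝ) ^ j)) (0 : M)
      (fun c _ => by simp only [Set.mem_Iio, add_zero, dist_self]; positivity)
    exact ⟨V, hV, fun c hc w hw => hV' c hc w hw⟩
  -- (c) neighborhoods for the avoidance conditions
  have hτ : ∀ t : ℕ × ℕ × ℕ, ∃ V, V ∈ 𝓝 (0 : M) ∧ (t.1 < j → t.2.1 < j → t.2.2 < j →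
      ∀ p ∈ myCSet ν s t.2.1 t.2.2 j, ∀ w1 ∈ V, ∀ w2 ∈ V, p + w1 + w2 ∉ F t.1) := by
    rintro ⟨n, k0, m⟩
    by_cases hlt : n < j ∧ k0 < j ∧ m < j
    · obtain ⟨hn, hk0, hm⟩ := hlt
      have hCc : IsCompact (myCSet ν s k0 m j) := myCSet_compact hproper s k0 m j
      have hdisj : ∀ p ∈ myCSet ν s k0 m j, p ∈ (F n)ᶜ := by
        rintro p ⟨r, hr, rfl⟩ hpF
        exact indep_combo j (fun i hi => (hGood i hi).2.2.2.2.2.2) k0 hk0 r (hFsub n hpF)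
      obtain ⟨V, hV, hV'⟩ := mytube (fun q : M × (M × M) => q.1 + q.2.1 + q.2.2)
        ((continuous_fst.add (continuous_fst.comp continuous_snd)).add
          (continuous_snd.comp continuous_snd)) hCc (hFclosed n).isOpen_compl
        ((0 : M), (0 : M)) (fun p hp => by simpa using hdisj p hp)
      rcases mem_nhds_prod_iff.1 hV with ⟨u, hu, w, hw, huw⟩
      refine ⟨u ∩ w, Filter.inter_mem hu hw, fun _ _ _ p hp w1 hw1 w2 hw2 => ?_⟩
      exact hV' p hp (w1, w2) (huw (Set.mk_mem_prod hw1.1 hw2.2))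
    · exact ⟨Set.univ, Filter.univ_mem, by tauto⟩
  choose Vt hVt1 hVt2 using hτ
  have hV4 : (⋂ t ∈ (Finset.range j ×ˢ Finset.range j ×ˢ Finset.range j), Vt t) ∈ 𝓝 (0 : M) :=
    (Filter.biInter_finset_mem _).2 fun t _ => hVt1 t
  obtain ⟨V2, hV2n, hV2p⟩ := hV2
  obtain ⟨V3, hV3n, hV3p⟩ := hV3
  have hT : V2 ∩ V3 ∩ (⋂ t ∈ (Finset.range j ×ˢ Finset.range j ×ˢ Finset.range j), Vt t)
      ∈ 𝓝 (0 : M) := Filter.inter_mem (Filter.inter_mem hV2n hV3n) hV4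
  rcases Metric.mem_nhds_iff.1 hT with ⟨ε, hε, hball⟩
  set W := Metric.closedBall (0 : M) (ε / 2) with hWdef
  have hWT : W ⊆ V2 ∩ V3 ∩
      (⋂ t ∈ (Finset.range j ×ˢ Finset.range j ×ˢ Finset.range j), Vt t) :=
    (Metric.closedBall_subset_ball (by linarith)).trans hball
  have hWn : W ∈ 𝓝 (0 : M) := Metric.closedBall_mem_nhds _ (by linarith)
  have hWc : IsClosed W := Metric.isClosed_closedBall
  -- (f) choice of v
  have hKR : IsCompact {r : R | ν r ≤ ((j : ℝ) + 1) * (Nat.factorial j : ℝ)} :=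
    ball_compact hproper _
  obtain ⟨V5, hV5n, hV5p⟩ := mytube (fun q : R × M => q.1 • q.2)
    (continuous_fst.smul continuous_snd) hKR isOpen_interior (0 : M)
    (fun r _ => by
      simp only [smul_zero]
      exact mem_interior_iff_mem_nhds.2 hWn)
  have hcnt : (N.mkQ '' ((fun i => (s i).2) '' Set.Iio j)).Countable :=
    ((Set.to_countable _).image _).image _
  obtain ⟨v, hvV5, hvspan⟩ := exists_small_indep N hrank hV5n _ hcnt
  refine ⟨(W, v), hWn, hWc, ?_, ?_, ?_, ?_, hvspan⟩
  · intro i hi a ha b hb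
    exact hV2p i hi a ((hWT ha).1.1) b ((hWT hb).1.1)
  · intro c hc w hw
    exact (hV3p c hc w ((hWT hw).1.2)).le
  · intro n k0 m hn hk0 hm p hp w1 hw1 w2 hw2
    have hmem : ∀ w' ∈ W, w' ∈ Vt (n, k0, m) := by
      intro w' hw'
      have := (hWT hw').2
      exact Set.mem_iInter₂.1 this (n, k0, m)
        (by simp [Finset.mem_product, Finset.mem_range]; omega)
    exact hVt2 (n, k0, m) hn hk0 hm p hp w1 (hmem w1 hw1) w2 (hmem w2 hw2)
  · intro r hr
    exact interior_subset (hV5p r hr v hvV5)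
end Step
section Seq
variable {R : Type*} [DivisionRing R] [TopologicalSpace R]
variable {M : Type*} [AddCommGroup M] [Module R M]

theorem seq_exists {ν : R → ℝ}
    (hproper : ∀ (a : R) (ε : ℝ), IsCompact {b : R | ν (b - a) ≤ ε})
    [MetricSpace M] [IsTopologicalAddGroup M] [ContinuousSMul R M]
    [TopologicalSpace.SeparableSpace M]
    (N : Submodule R M) (F : ℕ → Set M) (hFclosed : ∀ n, IsClosed (F n))
    (hFsub : ∀ n, F n ⊆ (N : Set M))
    (hrank : ¬ Module.rank R (M ⧸ N) ≤ Cardinal.aleph0) :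
    ∃ s : ℕ → Set M × M, ∀ j, GoodAt ν F N s j (s j) := by
  classical
  set next : (ℕ → Set M × M) → ℕ → Set M × M := fun pre j =>
    if h : ∀ i < j, GoodAt ν F N pre i (pre i) then
      Classical.choose (step_exists hproper N F hFclosed hFsub hrank pre j h)
    else (Set.univ, 0) with hnext
  set sig : ℕ → ℕ → Set M × M := fun j => Nat.rec (fun _ => (Set.univ, (0 : M)))
    (fun j prev => Function.update prev j (next prev j)) j with hsig
  have hsig_succ : ∀ j, sig (j + 1) = Function.update (sig j) j (next (sig j) j) :=
    fun j => rfl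
  set s : ℕ → Set M × M := fun j => sig (j + 1) j with hs
  have hmono : ∀ k i, i < k → sig (k + 1) i = sig k i := by
    intro k i hik
    rw [hsig_succ]
    exact Function.update_of_ne (by omega) _ _
  have hcoh : ∀ k i, i < k → sig k i = s i := by
    intro k
    induction k with
    | zero => omega
    | succ k ihk =>
      intro i hik
      rcases Nat.lt_succ_iff_lt_or_eq.1 hik with h | rfl
      · rw [hmono k i h, ihk i h]
      · rfl
  refine ⟨s, ?_⟩
  intro j
  induction j using Nat.strong_induction_on with
  | _ j ih =>
    have hpre : ∀ i < j, GoodAt ν F N (sig j) i (sig j i) := by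
      intro i hi
      have h1 : sig j i = s i := hcoh j i hi
      rw [h1]
      exact GoodAt_congr ν (fun i' hi' => (hcoh j i' (by omega)).symm) (ih i hi)
    have hsj : s j = next (sig j) j := by
      show sig (j + 1) j = _
      rw [hsig_succ]
      exact Function.update_self _ _ _
    rw [hsj]
    simp only [hnext]
    rw [dif_pos hpre]
    exact GoodAt_congr ν (fun i hi => hcoh j i hi)
      (Classical.choose_spec (step_exists hproper N F hFclosed hFsub hrank (sig j) j hpre))
end Seq
section Main
variable {R : Type*} [DivisionRing R] [TopologicalSpace R]
variable {M : Type*} [AddCommGroup M] [Module R M]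

theorem construction {ν : R → ℝ}
    (hnonneg : ∀ a, 0 ≤ ν a)
    (hzero : ∀ a : R, ν a = 0 ↔ a = 0)
    (hneg : ∀ a : R, ν (-a) = ν a)
    (hadd : ∀ a b : R, ν (a + b) ≤ ν a + ν b)
    (hmul : ∀ a b : R, ν (a * b) ≤ ν a * ν b)
    (htop : ∀ s : Set R, IsOpen s ↔ ∀ a ∈ s, ∃ ε > 0, ∀ b, ν (b - a) < ε → b ∈ s)
    (hproper : ∀ (a : R) (ε : ℝ), IsCompact {b : R | ν (b - a) ≤ ε})
    [MetricSpace M] [CompleteSpace M] [IsTopologicalAddGroup M] [ContinuousSMul R M]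
    [TopologicalSpace.SeparableSpace M]
    (N : Submodule R M) (F : ℕ → Set M) (hFclosed : ∀ n, IsClosed (F n))
    (hFcup : (N : Set M) = ⋃ n, F n)
    (hrank : ¬ Module.rank R (M ⧸ N) ≤ Cardinal.aleph0) :
    ∃ f : {x : ℕ → R // MemL1 ν x} → M,
      (∀ (x y : {x : ℕ → R // MemL1 ν x}) (h : MemL1 ν (x.1 + y.1)),
        f ⟨x.1 + y.1, h⟩ = f x + f y) ∧
      (∀ (r : R) (x : {x : ℕ → R // MemL1 ν x}) (h : MemL1 ν (r • x.1)),
        f ⟨r • x.1, h⟩ = r • f x) ∧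
      (∀ x : {x : ℕ → R // MemL1 ν x}, ∀ U ∈ nhds (f x),
        ∃ δ > 0, ∀ y : {x : ℕ → R // MemL1 ν x},
          l1Norm ν (y.1 - x.1) < δ → f y ∈ U) ∧
      (∀ x y : {x : ℕ → R // MemL1 ν x}, f x - f y ∈ N → x = y) := by
  classical
  have hFsub : ∀ n, F n ⊆ (N : Set M) := by
    intro n
    rw [hFcup]
    exact Set.subset_iUnion F n
  obtain ⟨s, hGoodAll⟩ := seq_exists hproper N F hFclosed hFsub hrank
  set W : ℕ → Set M := fun j => (s j).1 with hWdef
  set v : ℕ → M := fun j => (s j).2 with hvdef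
  have hWn : ∀ j, W j ∈ 𝓝 (0 : M) := fun j => (hGoodAll j).1
  have hWcl : ∀ j, IsClosed (W j) := fun j => (hGoodAll j).2.1
  have hP2 : ∀ i, ∀ a ∈ W (i + 1), ∀ b ∈ W (i + 1), a + b ∈ W i :=
    fun i => (hGoodAll (i + 1)).2.2.1 i rfl
  have hP3 : ∀ j, ∀ c ∈ myKStar ν s j, ∀ w ∈ W j, dist (c + w) c ≤ (2⁻¹ : ℝ) ^ j :=
    fun j => (hGoodAll j).2.2.2.1
  have hP4 : ∀ j n k0 m, n < j → k0 < j → m < j → ∀ p ∈ myCSet ν s k0 m j,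
      ∀ w1 ∈ W j, ∀ w2 ∈ W j, p + w1 + w2 ∉ F n := fun j => (hGoodAll j).2.2.2.2.1
  have hP5 : ∀ (j : ℕ) (r : R), ν r ≤ ((j : ℝ) + 1) * (Nat.factorial j : ℝ) → r • v j ∈ W j :=
    fun j => (hGoodAll j).2.2.2.2.2.1
  have h0W : ∀ j, (0 : M) ∈ W j := fun j => mem_of_mem_nhds (hWn j)
  have hWsub : ∀ j, W (j + 1) ⊆ W j := fun j a ha => by
    simpa using hP2 j a ha 0 (h0W (j + 1))
  set P : (ℕ → R) → ℕ → M := fun x j => ∑ k ∈ Finset.range j, x k • v k with hPdef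
  -- membership in the compact sets
  have hPK : ∀ (x : ℕ → R) (j : ℕ), (∀ k, ν (x k) ≤ (j : ℝ) * (Nat.factorial k : ℝ)) →
      P x j ∈ myKStar ν s j := fun x j hx => ⟨x, hx, rfl⟩
  -- step estimate
  have hstep : ∀ (x : ℕ → R) (m : ℕ), (∀ k, ν (x k) ≤ (m : ℝ) * (Nat.factorial k : ℝ)) →
      ∀ j, m ≤ j → dist (P x j) (P x (j + 1)) ≤ (2⁻¹ : ℝ) ^ j := by
    intro x m hx j hmj
    have hx' : ∀ k, ν (x k) ≤ (j : ℝ) * (Nat.factorial k : ℝ) := fun k => (hx k).trans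
      (mul_le_mul_of_nonneg_right (Nat.cast_le.2 hmj) (by positivity))
    have hc : P x j ∈ myKStar ν s j := hPK x j hx'
    have hw : x j • v j ∈ W j := hP5 j (x j) ((hx j).trans
      (mul_le_mul_of_nonneg_right
        (by have h := (Nat.cast_le (α := ℝ)).2 hmj; linarith) (by positivity)))
    have h1 : P x (j + 1) = P x j + x j • v j := Finset.sum_range_succ _ _
    rw [h1, dist_comm]
    exact hP3 j _ hc _ hw
  -- coefficient bound from the ℓ¹-norm
  have hcoefm : ∀ (x : ℕ → R), MemL1 ν x →
      ∀ k, ν (x k) ≤ ((max 1 ⌈l1Norm ν x⌉₊ : ℕ) : ℝ) * (Nat.factorial k : ℝ) := by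
    intro x hx k
    calc ν (x k) ≤ l1Norm ν x * (Nat.factorial k : ℝ) := coef_bound hnonneg hx k
      _ ≤ ((max 1 ⌈l1Norm ν x⌉₊ : ℕ) : ℝ) * (Nat.factorial k : ℝ) := by
        apply mul_le_mul_of_nonneg_right _ (by positivity)
        refine (Nat.le_ceil _).trans ?_
        exact_mod_cast Nat.le_max_right 1 ⌈l1Norm ν x⌉₊
  have hCauchy : ∀ (x : ℕ → R), MemL1 ν x → CauchySeq (P x) := by
    intro x hx
    set m : ℕ := max 1 ⌈l1Norm ν x⌉₊ with hm
    refine cauchySeq_of_dist_le_of_summable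
      (fun n => if n < m then dist (P x n) (P x (n + 1)) else (2⁻¹ : ℝ) ^ n) ?_ ?_
    · intro n
      by_cases h : n < m
      · rw [if_pos h]
      · rw [if_neg h]
        exact hstep x m (hcoefm x hx) n (by omega)
    · rw [← _root_.summable_nat_add_iff m]
      have heq : (fun n => if n + m < m then dist (P x (n + m)) (P x (n + m + 1))
          else (2⁻¹ : ℝ) ^ (n + m)) = fun n => (2⁻¹ : ℝ) ^ m * (2⁻¹ : ℝ) ^ n := by
        funext n
        rw [if_neg (by omega), pow_add, mul_comm]
      rw [heq]
      exact (summable_geometric_of_lt_one (by norm_num) (by norm_num)).mul_left _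
  have hlim : ∀ x : {x : ℕ → R // MemL1 ν x}, ∃ a, Tendsto (P x.1) atTop (𝓝 a) :=
    fun x => cauchySeq_tendsto_of_complete (hCauchy x.1 x.2)
  choose f hf using hlim
  -- additivity
  have hfadd : ∀ (x y : {x : ℕ → R // MemL1 ν x}) (h : MemL1 ν (x.1 + y.1)),
      f ⟨x.1 + y.1, h⟩ = f x + f y := by
    intro x y h
    have h1 : ∀ j, P (x.1 + y.1) j = P x.1 j + P y.1 j := by
      intro j
      rw [← Finset.sum_add_distrib]
      exact Finset.sum_congr rfl fun k _ => by rw [Pi.add_apply, add_smul]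
    have h2 : Tendsto (P (x.1 + y.1)) atTop (𝓝 (f x + f y)) :=
      ((hf x).add (hf y)).congr fun j => (h1 j).symm
    exact tendsto_nhds_unique (hf ⟨_, h⟩) h2
  -- homogeneity
  have hfsmul : ∀ (r : R) (x : {x : ℕ → R // MemL1 ν x}) (h : MemL1 ν (r • x.1)),
      f ⟨r • x.1, h⟩ = r • f x := by
    intro r x h
    have h1 : ∀ j, P (r • x.1) j = r • P x.1 j := by
      intro j
      rw [Finset.smul_sum]
      exact Finset.sum_congr rfl fun k _ => by
        rw [Pi.smul_apply, smul_eq_mul, mul_smul]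
    have h2 : Tendsto (P (r • x.1)) atTop (𝓝 (r • f x)) :=
      ((hf x).const_smul r).congr fun j => (h1 j).symm
    exact tendsto_nhds_unique (hf ⟨_, h⟩) h2
  -- tail estimate
  have htail : ∀ (x : ℕ → R) (hx : MemL1 ν x) (m : ℕ),
      (∀ k, ν (x k) ≤ (m : ℝ) * (Nat.factorial k : ℝ)) →
      ∀ j, m ≤ j → f ⟨x, hx⟩ - P x (j + 1) ∈ W j := by
    intro x hx m hcoef j hmj
    have hpart : ∀ l, j + 1 ≤ l → P x l - P x (j + 1) ∈ W j := by
      intro l hl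
      have h1 : P x l - P x (j + 1) = ∑ k ∈ Finset.Ico (j + 1) l, x k • v k :=
        (Finset.sum_Ico_eq_sub _ hl).symm
      rw [h1, Finset.sum_Ico_eq_sum_range]
      refine sumchain hP2 h0W _ j _ fun k hk => ?_
      refine hP5 _ _ ((hcoef _).trans (mul_le_mul_of_nonneg_right ?_ (by positivity)))
      have h := (Nat.cast_le (α := ℝ)).2 (show m ≤ j + 1 + k by omega)
      push_cast at h ⊢
      linarith
    have h2 : Tendsto (fun l => P x l - P x (j + 1)) atTop (𝓝 (f ⟨x, hx⟩ - P x (j + 1))) :=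
      (hf ⟨x, hx⟩).sub tendsto_const_nhds
    exact (hWcl j).mem_of_tendsto h2 (Filter.eventually_atTop.2 ⟨j + 1, hpart⟩)
  -- W j is inside a small closed ball
  have hWball : ∀ j, W j ⊆ Metric.closedBall (0 : M) ((2⁻¹ : ℝ) ^ j) := by
    intro j w hw
    have h0K : (0 : M) ∈ myKStar ν s j := by
      refine ⟨0, fun k => ?_, by simp⟩
      rw [Pi.zero_apply, (hzero 0).2 rfl]
      positivity
    have := hP3 j 0 h0K w hw
    simpa [Metric.mem_closedBall, dist_comm] using this
  -- smallness of images of small sequences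
  have hsmall : ∀ j0 : ℕ, ∃ δ > 0, ∀ (z : ℕ → R) (hz : MemL1 ν z),
      l1Norm ν z < δ → f ⟨z, hz⟩ ∈ W j0 := by
    intro j0
    have h7 : ∀ k : ℕ, ∃ ε > 0, ∀ r : R, ν r < ε → r • v k ∈ W (j0 + 3 + k) := by
      intro k
      have hcont : Tendsto (fun r : R => r • v k) (𝓝 0) (𝓝 (0 : M)) := by
        have h := (continuous_id.smul (continuous_const (y := v k))).tendsto (0 : R)
        simpa [zero_smul] using (show Tendsto (fun r : R => r • v k) (𝓝 0) (𝓝 ((0 : R) • v k)) from h)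
      have hpre : (fun r : R => r • v k) ⁻¹' (W (j0 + 3 + k)) ∈ 𝓝 (0 : R) := hcont (hWn _)
      obtain ⟨O, hOsub, hOopen, hO0⟩ := mem_nhds_iff.1 hpre
      obtain ⟨ε, hε, hball⟩ := (htop O).1 hOopen 0 hO0
      exact ⟨ε, hε, fun r hr => hOsub (hball r (by simpa using hr))⟩
    choose ε hεpos hε using h7
    refine ⟨min 1 ((Finset.range (j0 + 2)).inf' ⟨0, by simp⟩
      fun k => ε k / (Nat.factorial k : ℝ)), ?_, ?_⟩
    · refine lt_min one_pos ?_
      refine (Finset.lt_inf'_iff _).2 ?_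
      intro k _
      exact div_pos (hεpos k) (by positivity)
    · intro z hz hl1
      set δ := min 1 ((Finset.range (j0 + 2)).inf' ⟨0, by simp⟩
        fun k => ε k / (Nat.factorial k : ℝ)) with hδdef
      have hδ1 : δ ≤ 1 := min_le_left _ _
      have hcz : ∀ k, ν (z k) ≤ ((1 : ℕ) : ℝ) * (Nat.factorial k : ℝ) := by
        intro k
        calc ν (z k) ≤ l1Norm ν z * (Nat.factorial k : ℝ) := coef_bound hnonneg hz k
          _ ≤ ((1 : ℕ) : ℝ) * (Nat.factorial k : ℝ) :=
            mul_le_mul_of_nonneg_right (by push_cast; linarith) (by positivity)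
      have htl : f ⟨z, hz⟩ - P z (j0 + 2) ∈ W (j0 + 1) :=
        htail z hz 1 hcz (j0 + 1) (by omega)
      have hhead : P z (j0 + 2) ∈ W (j0 + 1) := by
        refine sumchain hP2 h0W (j0 + 2) (j0 + 1) _ fun k hk => ?_
        have h8 : z k • v k ∈ W (j0 + 3 + k) := by
          apply hε k
          have h9 : l1Norm ν z < ε k / (Nat.factorial k : ℝ) :=
            lt_of_lt_of_le hl1 ((min_le_right _ _).trans
              (Finset.inf'_le _ (Finset.mem_range.2 (by omega))))
          calc ν (z k) ≤ l1Norm ν z * (Nat.factorial k : ℝ) := coef_bound hnonneg hz k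
            _ < (ε k / (Nat.factorial k : ℝ)) * (Nat.factorial k : ℝ) :=
              mul_lt_mul_of_pos_right h9 (by positivity)
            _ = ε k := by field_simp
        have heq : j0 + 3 + k = (j0 + 1 + 1 + k) + 1 := by omega
        rw [heq] at h8
        exact hWsub _ h8
      have := hP2 j0 _ htl _ hhead
      simpa using this
  -- continuity
  have hcont : ∀ x : {x : ℕ → R // MemL1 ν x}, ∀ U ∈ 𝓝 (f x),
      ∃ δ > 0, ∀ y : {x : ℕ → R // MemL1 ν x}, l1Norm ν (y.1 - x.1) < δ → f y ∈ U := by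
    intro x U hU
    have htrans : {w : M | f x + w ∈ U} ∈ 𝓝 (0 : M) := by
      have hc : ContinuousAt (fun w : M => f x + w) 0 :=
        (continuous_const.add continuous_id).continuousAt
      have := hc.preimage_mem_nhds (by simpa using hU)
      simpa [Set.preimage] using this
    rcases Metric.mem_nhds_iff.1 htrans with ⟨ε', hε', hball⟩
    obtain ⟨j0, hj0⟩ := exists_pow_lt_of_lt_one hε' (by norm_num : (2⁻¹ : ℝ) < 1)
    obtain ⟨δ, hδpos, hδ⟩ := hsmall j0
    refine ⟨δ, hδpos, ?_⟩
    intro y hy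
    have hzmem : MemL1 ν (y.1 - x.1) := memL1_sub hnonneg hneg hadd y.2 x.2
    have h1 : f ⟨y.1 - x.1, hzmem⟩ ∈ W j0 := hδ _ hzmem hy
    have h2 : f y = f x + f ⟨y.1 - x.1, hzmem⟩ := by
      have h3 := hfadd x ⟨y.1 - x.1, hzmem⟩ (memL1_add hnonneg hadd x.2 hzmem)
      have h4 : (⟨x.1 + (y.1 - x.1), memL1_add hnonneg hadd x.2 hzmem⟩ :
          {x : ℕ → R // MemL1 ν x}) = y := Subtype.ext (by funext k; simp)
      rw [h4] at h3
      exact h3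
    rw [h2]
    apply hball
    exact Metric.closedBall_subset_ball hj0 (hWball j0 h1)
  -- injectivity
  have hinj : ∀ x y : {x : ℕ → R // MemL1 ν x}, f x - f y ∈ N → x = y := by
    intro x y hxy
    by_contra hne
    have hz : MemL1 ν (x.1 - y.1) := memL1_sub hnonneg hneg hadd x.2 y.2
    have hzne : x.1 - y.1 ≠ 0 := fun h => hne (Subtype.ext (sub_eq_zero.1 h))
    have hfz : f ⟨x.1 - y.1, hz⟩ ∈ N := by
      have h3 := hfadd y ⟨x.1 - y.1, hz⟩ (memL1_add hnonneg hadd y.2 hz)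
      have h4 : (⟨y.1 + (x.1 - y.1), memL1_add hnonneg hadd y.2 hz⟩ :
          {x : ℕ → R // MemL1 ν x}) = x := Subtype.ext (by funext k; simp)
      rw [h4] at h3
      have h5 : f ⟨x.1 - y.1, hz⟩ = f x - f y := by
        rw [h3]
        abel
      rw [h5]
      exact hxy
    have hex : ∃ k, (x.1 - y.1) k ≠ 0 := by
      by_contra hcon
      push_neg at hcon
      exact hzne (funext hcon)
    set z : ℕ → R := x.1 - y.1 with hzdef
    set k0 := Nat.find hex with hk0def
    have hk0 : z k0 ≠ 0 := Nat.find_spec hex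
    have hk0min : ∀ k < k0, z k = 0 := fun k hk => not_not.1 (Nat.find_min hex hk)
    set c := (z k0)⁻¹ with hcdef
    set x' : ℕ → R := c • z with hx'def
    have hx' : MemL1 ν x' := memL1_smul hnonneg hmul c hz
    have hx'k0 : x' k0 = 1 := by
      simp only [hx'def, Pi.smul_apply, smul_eq_mul, hcdef]
      exact inv_mul_cancel₀ hk0
    have hx'lt : ∀ k < k0, x' k = 0 := fun k hk => by
      simp only [hx'def, Pi.smul_apply, smul_eq_mul, hk0min k hk, mul_zero]
    have hfx' : f ⟨x', hx'⟩ ∈ N := by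
      have h6 := hfsmul c ⟨z, hz⟩ hx'
      rw [h6]
      exact N.smul_mem c hfz
    obtain ⟨n, hn⟩ : ∃ n, f ⟨x', hx'⟩ ∈ F n := by
      have h7 : f ⟨x', hx'⟩ ∈ (N : Set M) := hfx'
      rw [hFcup] at h7
      exact Set.mem_iUnion.1 h7
    set m : ℕ := max 1 ⌈l1Norm ν x'⌉₊ with hmdef
    have hcoef : ∀ k, ν (x' k) ≤ (m : ℝ) * (Nat.factorial k : ℝ) := hcoefm x' hx'
    set j := n + k0 + m + 1 with hjdef
    have hw1 : x' j • v j ∈ W j := hP5 j _ ((hcoef j).trans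
      (mul_le_mul_of_nonneg_right
        (by have h := (Nat.cast_le (α := ℝ)).2 (show m ≤ j by omega); linarith)
        (by positivity)))
    have hw2 : f ⟨x', hx'⟩ - P x' (j + 1) ∈ W j := htail x' hx' m hcoef j (by omega)
    have hpC : P x' j ∈ myCSet ν s k0 m j := by
      refine ⟨x', hcoef, ?_⟩
      show v k0 + ∑ k ∈ Finset.Ico (k0 + 1) j, x' k • v k = P x' j
      have hsplit : ∑ k ∈ Finset.range j, x' k • v k =
          (∑ k ∈ Finset.Ico 0 (k0 + 1), x' k • v k) +
          ∑ k ∈ Finset.Ico (k0 + 1) j, x' k • v k := by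
        rw [Finset.range_eq_Ico,
          ← Finset.sum_Ico_consecutive (fun k => x' k • v k) (Nat.zero_le (k0 + 1))
            (show k0 + 1 ≤ j by omega)]
      have hfirst : ∑ k ∈ Finset.Ico 0 (k0 + 1), x' k • v k = v k0 := by
        rw [← Finset.range_eq_Ico, Finset.sum_range_succ,
          Finset.sum_eq_zero fun k hk => by
            rw [hx'lt k (Finset.mem_range.1 hk), zero_smul],
          zero_add, hx'k0, one_smul]
      show v k0 + ∑ k ∈ Finset.Ico (k0 + 1) j, x' k • v k = ∑ k ∈ Finset.range j, x' k • v k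
      rw [hsplit, hfirst]
    have h9 := hP4 j n k0 m (by omega) (by omega) (by omega) (P x' j) hpC _ hw1 _ hw2
    apply h9
    have h10 : P x' j + x' j • v j + (f ⟨x', hx'⟩ - P x' (j + 1)) = f ⟨x', hx'⟩ := by
      have h11 : P x' j + x' j • v j = P x' (j + 1) := (Finset.sum_range_succ _ _).symm
      rw [h11]
      abel
    rw [h10]
    exact hn
  exact ⟨f, hfadd, hfsmul, hcont, hinj⟩
end Main

theorem stmt_15 (R : Type*) [DivisionRing R] [TopologicalSpace R]
    [IsTopologicalRing R] (ν : R → ℝ)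
    -- ν is a proper norm on the division ring R, inducing its topology:
    (hnonneg : ∀ a, 0 ≤ ν a)
    (hzero : ∀ a, ν a = 0 ↔ a = 0)
    (hneg : ∀ a, ν (-a) = ν a)
    (hadd : ∀ a b, ν (a + b) ≤ ν a + ν b)
    (hmul : ∀ a b, ν (a * b) ≤ ν a * ν b)
    (htop : ∀ s : Set R, IsOpen s ↔ ∀ a ∈ s, ∃ ε > 0, ∀ b, ν (b - a) < ε → b ∈ s)
    (hproper : ∀ (a : R) (ε : ℝ), IsCompact {b : R | ν (b - a) ≤ ε})
    -- M is a Polish topological R-vector space: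
    (M : Type*) [AddCommGroup M] [Module R M] [TopologicalSpace M]
    [IsTopologicalAddGroup M] [ContinuousSMul R M] [PolishSpace M]
    -- N is an F_σ vector subspace of M:
    (N : Submodule R M)
    (hFsigma : ∃ F : ℕ → Set M, (∀ n, IsClosed (F n)) ∧ (N : Set M) = ⋃ n, F n) :
    -- exactly one of the following holds:
    Xor
      -- (1) dim_R(M/N) is countable:
      (Module.rank R (M ⧸ N) ≤ Cardinal.aleph0)
      -- (2) there is a continuous R-linear map ℓ¹(R) → M descending to an
      --     injection ℓ¹(R) → M/N:
      (∃ f : {x : ℕ → R // MemL1 ν x} → M,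
        (∀ (x y : {x : ℕ → R // MemL1 ν x}) (h : MemL1 ν (x.1 + y.1)),
          f ⟨x.1 + y.1, h⟩ = f x + f y) ∧
        (∀ (r : R) (x : {x : ℕ → R // MemL1 ν x}) (h : MemL1 ν (r • x.1)),
          f ⟨r • x.1, h⟩ = r • f x) ∧
        (∀ x : {x : ℕ → R // MemL1 ν x}, ∀ U ∈ nhds (f x),
          ∃ δ > 0, ∀ y : {x : ℕ → R // MemL1 ν x},
            l1Norm ν (y.1 - x.1) < δ → f y ∈ U) ∧
        (∀ x y : {x : ℕ → R // MemL1 ν x}, f x - f y ∈ N → x = y)) := by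
  by_cases h1 : Module.rank R (M ⧸ N) ≤ Cardinal.aleph0
  · refine Or.inl ⟨h1, ?_⟩
    rintro ⟨f, hfadd, hfsmul, _, hfinj⟩
    exact not_two hnonneg hzero hadd hmul N h1 f hfadd hfsmul hfinj
  · obtain ⟨F, hFclosed, hFcup⟩ := hFsigma
    letI := TopologicalSpace.upgradeIsCompletelyMetrizable M
    exact Or.inr ⟨construction hnonneg hzero hneg hadd hmul htop hproper N F
      hFclosed hFcup h1, h1⟩
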